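/- Let (W, F) be a complete cotorsion pair in an abelian category A with enough injectives. Then the following are equivalent: (1) W is thick and W ∩ F equals the class of injective objects of A; (2) (W, F) is hereditary and W ∩ F equals the class of injective objects of A; (3) W is thick and W contains all injective objects of A. -/

import Mathlib

open CategoryTheory CategoryTheory.Limits

universe w v u

variable {A : Type u} [Category.{v} A] [Abelian A]

/-- `IsShortExact i p` asserts that `0 → X → Y → Z → 0` is a short exact sequence. -/
def IsShortExact {X Y Z : A} (i : X ⟶ Y) (p : Y ⟶ Z) : Prop :=
  ∃ w : i ≫ p = 0, (ShortComplex.mk i p w).ShortExact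

section Ext

variable [HasExt.{w} A]

/-- `Ext¹(X, Y) = 0`. -/
def Ext1Zero (X Y : A) : Prop := Subsingleton (Abelian.Ext X Y 1)

/-- `(F, C)` is a cotorsion pair: each class is the `Ext¹`-orthogonal of the other. -/
def IsCotorsionPair (F C : Set A) : Prop :=
  (∀ X : A, X ∈ F ↔ ∀ Y ∈ C, Ext1Zero.{w} X Y) ∧
  (∀ Y : A, Y ∈ C ↔ ∀ X ∈ F, Ext1Zero.{w} X Y)

/-- A complete cotorsion pair: for every object `X` there are short exact sequences
`0 → C → F → X → 0` and `0 → X → C' → F' → 0` with `F, F'` in the left class and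
`C, C'` in the right class. -/
def IsCompleteCotorsionPair (F C : Set A) : Prop :=
  IsCotorsionPair.{w} F C ∧
  (∀ X : A, ∃ (Co Fo : A) (i : Co ⟶ Fo) (p : Fo ⟶ X),
    Co ∈ C ∧ Fo ∈ F ∧ IsShortExact i p) ∧
  (∀ X : A, ∃ (Co Fo : A) (i : X ⟶ Co) (p : Co ⟶ Fo),
    Co ∈ C ∧ Fo ∈ F ∧ IsShortExact i p)

end Ext

/-- A thick class: closed under direct summands (retracts) and satisfying two-out-of-three
for short exact sequences. -/
def IsThickClass (W : Set A) : Prop :=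
  (∀ (X Y : A) (s : Y ⟶ X) (r : X ⟶ Y), s ≫ r = 𝟙 Y → X ∈ W → Y ∈ W) ∧
  (∀ ⦃X Y Z : A⦄ (i : X ⟶ Y) (p : Y ⟶ Z), IsShortExact i p →
    (X ∈ W → Y ∈ W → Z ∈ W) ∧ (X ∈ W → Z ∈ W → Y ∈ W) ∧ (Y ∈ W → Z ∈ W → X ∈ W))

/-- The class `F` is closed under kernels of epimorphisms between objects of `F`. -/
def ClosedUnderKernelsOfEpis (F : Set A) : Prop :=
  ∀ ⦃X Y Z : A⦄ (i : X ⟶ Y) (p : Y ⟶ Z), IsShortExact i p → Y ∈ F → Z ∈ F → X ∈ F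

/-- The class `C` is closed under cokernels of monomorphisms between objects of `C`. -/
def ClosedUnderCokernelsOfMonos (C : Set A) : Prop :=
  ∀ ⦃X Y Z : A⦄ (i : X ⟶ Y) (p : Y ⟶ Z), IsShortExact i p → X ∈ C → Y ∈ C → Z ∈ C

/-- An injective cotorsion pair: a complete cotorsion pair `(W, F)` with `W` thick and
`W ∩ F` equal to the class of injective objects. -/
def IsInjectiveCotorsionPair [HasExt.{w} A] (W F : Set A) : Prop :=
  IsCompleteCotorsionPair.{w} W F ∧ IsThickClass W ∧
  ∀ X : A, (X ∈ W ∧ X ∈ F) ↔ Injective X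

/-- A projective cotorsion pair: a complete cotorsion pair `(C, W)` with `W` thick and
`C ∩ W` equal to the class of projective objects. -/
def IsProjectiveCotorsionPair [HasExt.{w} A] (C W : Set A) : Prop :=
  IsCompleteCotorsionPair.{w} C W ∧ IsThickClass W ∧
  ∀ X : A, (X ∈ C ∧ X ∈ W) ↔ Projective X

/-- A Hovey triple `(Q, W, R)`: `W` is thick and both `(Q, W ∩ R)` and `(Q ∩ W, R)` are
complete cotorsion pairs. -/
def IsHoveyTriple [HasExt.{w} A] (Q W R : Set A) : Prop :=
  IsThickClass W ∧ IsCompleteCotorsionPair.{w} Q (W ∩ R) ∧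
    IsCompleteCotorsionPair.{w} (Q ∩ W) R

section DiagramLemmas

lemma isShortExact_of_mono {X Y : A} (f : X ⟶ Y) [Mono f] :
    IsShortExact f (cokernel.π f) :=
  ⟨cokernel.condition f,
    ShortComplex.ShortExact.mk'
      (ShortComplex.exact_of_g_is_cokernel _ (cokernelIsCokernel f)) ‹_› inferInstance⟩

lemma isShortExact_pullback {X Y Z : A} {i : X ⟶ Y} {p : Y ⟶ Z} (w : i ≫ p = 0)
    (hS : (ShortComplex.mk i p w).ShortExact) {K : A} (k : K ⟶ Z) :
    IsShortExact (pullback.lift i 0 (by rw [w, zero_comp]) : X ⟶ pullback p k)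
      (pullback.snd p k) := by
  haveI : Mono i := hS.mono_f
  haveI : Epi p := hS.epi_g
  have hmono : Mono (pullback.lift i 0 (by rw [w, zero_comp]) : X ⟶ pullback p k) :=
    mono_of_mono_fac (pullback.lift_fst i 0 (by rw [w, zero_comp]))
  refine ⟨by simp [pullback.lift_fst, pullback.lift_snd], ShortComplex.ShortExact.mk' ?_ hmono inferInstance⟩
  apply ShortComplex.exact_of_f_is_kernel
  exact KernelFork.IsLimit.ofι' _ _ (fun {T} t ht => by
    have h1 : (t ≫ pullback.fst p k) ≫ p = 0 := by
      rw [Category.assoc, pullback.condition, ← Category.assoc, ht, zero_comp]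
    obtain ⟨l, hl⟩ := KernelFork.IsLimit.lift' hS.fIsKernel (t ≫ pullback.fst p k) h1
    refine ⟨l, ?_⟩
    apply pullback.hom_ext
    · simpa [pullback.lift_fst, pullback.lift_snd] using hl
    · simpa [pullback.lift_fst, pullback.lift_snd] using ht.symm)

lemma isShortExact_pullback' {X Y Z : A} {i : X ⟶ Y} {p : Y ⟶ Z} (w : i ≫ p = 0)
    (hS : (ShortComplex.mk i p w).ShortExact) {K : A} (k : K ⟶ Z) :
    IsShortExact (pullback.lift 0 i (by rw [w, zero_comp]) : X ⟶ pullback k p)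
      (pullback.fst k p) := by
  obtain ⟨w', hT⟩ := isShortExact_pullback w hS k
  refine ⟨by simp [pullback.lift_fst, pullback.lift_snd], ?_⟩
  refine ShortComplex.shortExact_of_iso ?_ hT
  refine ShortComplex.isoMk (Iso.refl _) (pullbackSymmetry p k) (Iso.refl _) ?_ ?_
  · apply pullback.hom_ext <;> simp [pullback.lift_fst, pullback.lift_snd]
  · simp

lemma isShortExact_pullback_fst_comp {C₁ C₀ D W₁ : A} {f : C₁ ⟶ C₀} {q : C₀ ⟶ D}
    (w : f ≫ q = 0) (hS : (ShortComplex.mk f q w).ShortExact) (p₁ : W₁ ⟶ C₀) [Epi p₁] :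
    IsShortExact (pullback.fst p₁ f) (p₁ ≫ q) := by
  haveI : Mono f := hS.mono_f
  haveI : Epi q := hS.epi_g
  refine ⟨by rw [← Category.assoc, pullback.condition, Category.assoc, w, comp_zero], ?_⟩
  refine ShortComplex.ShortExact.mk' ?_ inferInstance inferInstance
  apply ShortComplex.exact_of_f_is_kernel
  exact KernelFork.IsLimit.ofι' _ _ (fun {T} t ht => by
    have h1 : (t ≫ p₁) ≫ q = 0 := by rw [Category.assoc]; exact ht
    obtain ⟨v, hv⟩ := KernelFork.IsLimit.lift' hS.fIsKernel (t ≫ p₁) h1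
    exact ⟨pullback.lift t v (by simpa using hv.symm), pullback.lift_fst _ _ _⟩)

lemma isShortExact_pushout {X Y Z : A} {i : X ⟶ Y} {p : Y ⟶ Z} (w : i ≫ p = 0)
    (hS : (ShortComplex.mk i p w).ShortExact) {C : A} (c : X ⟶ C) :
    IsShortExact (pushout.inr i c)
      (pushout.desc p 0 (by rw [w, comp_zero]) : pushout i c ⟶ Z) := by
  haveI : Mono i := hS.mono_f
  haveI : Epi p := hS.epi_g
  have hepi : Epi (pushout.desc p 0 (by rw [w, comp_zero]) : pushout i c ⟶ Z) :=
    epi_of_epi_fac (pushout.inl_desc p 0 (by rw [w, comp_zero]))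
  refine ⟨by simp [pushout.inl_desc, pushout.inr_desc], ShortComplex.ShortExact.mk' ?_ inferInstance hepi⟩
  apply ShortComplex.exact_of_g_is_cokernel
  exact CokernelCofork.IsColimit.ofπ' _ _ (fun {T} t ht => by
    have h1 : i ≫ (pushout.inl i c ≫ t) = 0 := by
      rw [← Category.assoc, pushout.condition, Category.assoc, ht, comp_zero]
    obtain ⟨v, hv⟩ := CokernelCofork.IsColimit.desc' hS.gIsCokernel (pushout.inl i c ≫ t) h1
    refine ⟨v, ?_⟩
    apply pushout.hom_ext
    · simpa [pushout.inl_desc_assoc, pushout.inr_desc_assoc] using hv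
    · simpa [pushout.inl_desc_assoc, pushout.inr_desc_assoc] using ht.symm)

lemma isShortExact_pushout' {X Y Z : A} {i : X ⟶ Y} {p : Y ⟶ Z} (w : i ≫ p = 0)
    (hS : (ShortComplex.mk i p w).ShortExact) {C : A} (c : X ⟶ C) :
    IsShortExact (pushout.inl c i)
      (pushout.desc 0 p (by rw [w, comp_zero]) : pushout c i ⟶ Z) := by
  obtain ⟨w', hT⟩ := isShortExact_pushout w hS c
  refine ⟨by simp [pushout.inl_desc, pushout.inr_desc], ?_⟩
  refine ShortComplex.shortExact_of_iso ?_ hT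
  refine ShortComplex.isoMk (Iso.refl _) (pushoutSymmetry i c) (Iso.refl _) ?_ ?_
  · simp [pushout.inl_desc, pushout.inr_desc]
  · apply pushout.hom_ext <;> simp [pushout.inl_desc, pushout.inr_desc]

end DiagramLemmas

section ExtLemmas

open Abelian

variable [HasExt.{w} A]

lemma Ext1Zero.eq_zero {X Y : A} (h : Ext1Zero.{w} X Y) (e : Abelian.Ext X Y 1) : e = 0 :=
  @Subsingleton.elim _ h e 0

lemma ext1Zero_of_eq_zero {X Y : A} (h : ∀ e : Abelian.Ext X Y 1, e = 0) :
    Ext1Zero.{w} X Y :=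
  ⟨fun a b => by rw [h a, h b]⟩

/-- If `0 → X₁ → X₂ → X₃ → 0` is exact and `Ext¹(X₁, Y) = Ext¹(X₃, Y) = 0` then
`Ext¹(X₂, Y) = 0`. -/
lemma ext1Zero_two_left {S : ShortComplex A} (hS : S.ShortExact) {Y : A}
    (h₁ : Ext1Zero.{w} S.X₁ Y) (h₃ : Ext1Zero.{w} S.X₃ Y) : Ext1Zero.{w} S.X₂ Y := by
  apply ext1Zero_of_eq_zero
  intro e
  obtain ⟨x₁, hx₁⟩ := Ext.contravariant_sequence_exact₂ hS Y e (h₁.eq_zero _)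
  rw [← hx₁, h₃.eq_zero x₁, Ext.comp_zero]

/-- If `0 → X₁ → X₂ → X₃ → 0` is exact and `Ext¹(X, X₁) = Ext¹(X, X₃) = 0` then
`Ext¹(X, X₂) = 0`. -/
lemma ext1Zero_two_right {S : ShortComplex A} (hS : S.ShortExact) {X : A}
    (h₁ : Ext1Zero.{w} X S.X₁) (h₃ : Ext1Zero.{w} X S.X₃) : Ext1Zero.{w} X S.X₂ := by
  apply ext1Zero_of_eq_zero
  intro e
  obtain ⟨x₁, hx₁⟩ := Ext.covariant_sequence_exact₂ X hS e (h₃.eq_zero _)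
  rw [← hx₁, h₁.eq_zero x₁, Ext.zero_comp]

lemma ext1Zero_X₃_left {S : ShortComplex A} (hS : S.ShortExact) (hcls : hS.extClass = 0)
    {Y : A} (h₂ : Ext1Zero.{w} S.X₂ Y) : Ext1Zero.{w} S.X₃ Y := by
  apply ext1Zero_of_eq_zero
  intro e
  obtain ⟨x₁, hx₁⟩ := Ext.contravariant_sequence_exact₃ hS Y e (h₂.eq_zero _) (add_zero 1)
  rw [← hx₁, hcls, Ext.zero_comp]

lemma ext1Zero_X₁_right {S : ShortComplex A} (hS : S.ShortExact) (hcls : hS.extClass = 0)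
    {X : A} (h₂ : Ext1Zero.{w} X S.X₂) : Ext1Zero.{w} X S.X₁ := by
  apply ext1Zero_of_eq_zero
  intro e
  obtain ⟨x₃, hx₃⟩ := Ext.covariant_sequence_exact₁ X hS e (h₂.eq_zero _) (zero_add 1)
  rw [← hx₃, hcls, Ext.comp_zero]

lemma extClass_zero_of_retraction {S : ShortComplex A} (hS : S.ShortExact)
    (r : S.X₂ ⟶ S.X₁) (hr : S.f ≫ r = 𝟙 S.X₁) : hS.extClass = 0 := by
  have h1 : hS.extClass = hS.extClass.comp (Ext.mk₀ (S.f ≫ r)) (add_zero 1) := by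
    rw [hr, Ext.comp_mk₀_id]
  rw [h1, ← Ext.mk₀_comp_mk₀ S.f r, ← Ext.comp_assoc_of_third_deg_zero,
    hS.extClass_comp, Ext.zero_comp]

lemma extClass_zero_of_ext_section {S : ShortComplex A} (hS : S.ShortExact)
    (x : Abelian.Ext S.X₃ S.X₂ 0) (hx : x.comp (Ext.mk₀ S.g) (add_zero 0) = Ext.mk₀ (𝟙 S.X₃)) :
    hS.extClass = 0 := by
  have h1 : hS.extClass = (x.comp (Ext.mk₀ S.g) (add_zero 0)).comp hS.extClass (zero_add 1) := by
    rw [hx, Ext.mk₀_id_comp]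
  rw [h1, Ext.comp_assoc_of_second_deg_zero, hS.comp_extClass, Ext.comp_zero]

/-- If `0 → X₁ → X₂ → X₃ → 0` is exact with `Ext¹(X₃, X₁) = 0` ("split") and
`Ext¹(Z, X₂) = 0`, then `Ext¹(Z, X₃) = 0`. -/
lemma ext1Zero_X₃_right {S : ShortComplex A} (hS : S.ShortExact)
    (hsplit : Ext1Zero.{w} S.X₃ S.X₁) {Z : A} (h₂ : Ext1Zero.{w} Z S.X₂) :
    Ext1Zero.{w} Z S.X₃ := by
  obtain ⟨s, hs⟩ := Ext.covariant_sequence_exact₃ S.X₃ hS (Ext.mk₀ (𝟙 S.X₃)) (zero_add 1)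
    (by rw [Ext.mk₀_id_comp]; exact hsplit.eq_zero _)
  apply ext1Zero_of_eq_zero
  intro e
  have h1 : e.comp (s.comp (Ext.mk₀ S.g) (add_zero 0)) (add_zero 1) = e := by
    rw [hs, Ext.comp_mk₀_id]
  rw [← h1, ← Ext.comp_assoc e s (Ext.mk₀ S.g) (add_zero 1) (add_zero 0) (by omega),
    h₂.eq_zero (e.comp s (add_zero 1)), Ext.zero_comp]

/-- If `0 → X₁ → X₂ → X₃ → 0` is exact with `Ext¹(X₃, X₁) = 0` ("split") and
`Ext¹(X₂, Y) = 0`, then `Ext¹(X₁, Y) = 0`. -/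
lemma ext1Zero_X₁_left {S : ShortComplex A} (hS : S.ShortExact)
    (hsplit : Ext1Zero.{w} S.X₃ S.X₁) {Y : A} (h₂ : Ext1Zero.{w} S.X₂ Y) :
    Ext1Zero.{w} S.X₁ Y := by
  obtain ⟨x, hx⟩ := Ext.contravariant_sequence_exact₁ hS S.X₁ (Ext.mk₀ (𝟙 S.X₁)) (add_zero 1)
    (by rw [Ext.comp_mk₀_id]; exact hsplit.eq_zero _)
  apply ext1Zero_of_eq_zero
  intro e
  have h1 : ((Ext.mk₀ S.f).comp x (zero_add 0)).comp e (zero_add 1) = e := by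
    rw [hx, Ext.mk₀_id_comp]
  rw [← h1, Ext.comp_assoc_of_second_deg_zero, h₂.eq_zero (x.comp e (zero_add 1)),
    Ext.comp_zero]

lemma ext1Zero_of_retract_left {X X' Y : A} (s : X ⟶ X') (r : X' ⟶ X) (hsr : s ≫ r = 𝟙 X)
    (h : Ext1Zero.{w} X' Y) : Ext1Zero.{w} X Y := by
  apply ext1Zero_of_eq_zero
  intro e
  have h1 : ((Ext.mk₀ s).comp (Ext.mk₀ r) (zero_add 0)).comp e (zero_add 1) = e := by
    rw [Ext.mk₀_comp_mk₀, hsr, Ext.mk₀_id_comp]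
  rw [← h1, Ext.comp_assoc_of_second_deg_zero, h.eq_zero ((Ext.mk₀ r).comp e (zero_add 1)),
    Ext.comp_zero]

lemma ext1Zero_of_retract_right {X Y Y' : A} (s : Y ⟶ Y') (r : Y' ⟶ Y) (hsr : s ≫ r = 𝟙 Y)
    (h : Ext1Zero.{w} X Y') : Ext1Zero.{w} X Y := by
  apply ext1Zero_of_eq_zero
  intro e
  have h1 : e.comp ((Ext.mk₀ s).comp (Ext.mk₀ r) (zero_add 0)) (add_zero 1) = e := by
    rw [Ext.mk₀_comp_mk₀, hsr, Ext.comp_mk₀_id]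
  rw [← h1, ← Ext.comp_assoc e (Ext.mk₀ s) (Ext.mk₀ r) (add_zero 1) (zero_add 0) (by omega),
    h.eq_zero (e.comp (Ext.mk₀ s) (add_zero 1)), Ext.zero_comp]

end ExtLemmas

section Retraction

open Abelian DerivedCategory

variable [HasExt.{w} A]

/-- From a short exact sequence `0 → X₁ → X₂ → X₃ → 0` with `Ext¹(X₃, X₁) = 0`, extract an
actual retraction of `S.f`. -/
lemma exists_retraction {S : ShortComplex A} (hS : S.ShortExact)
    (h1 : Ext1Zero.{w} S.X₃ S.X₁) : ∃ r : S.X₂ ⟶ S.X₁, S.f ≫ r = 𝟙 S.X₁ := by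
  obtain ⟨x, hx⟩ := Ext.contravariant_sequence_exact₁ hS S.X₁ (Ext.mk₀ (𝟙 S.X₁)) (add_zero 1)
    (by rw [Ext.comp_mk₀_id]; exact h1.eq_zero _)
  letI := HasDerivedCategory.standard A
  -- natural isomorphism `singleFunctor A 0 ⋙ homologyFunctor A 0 ≅ 𝟭 A`
  let e₁ : singleFunctor A 0 ≅ CochainComplex.singleFunctor A 0 ⋙ Q :=
    (SingleFunctors.evaluation _ _ (0 : ℤ)).mapIso (singleFunctorsPostcompQIso A)
  let ε : singleFunctor A 0 ⋙ homologyFunctor A 0 ≅ 𝟭 A :=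
    Functor.isoWhiskerRight e₁ (homologyFunctor A 0) ≪≫ Functor.associator _ _ _ ≪≫
      Functor.isoWhiskerLeft (CochainComplex.singleFunctor A 0) (homologyFunctorFactors A 0) ≪≫
      HomologicalComplex.homologyFunctorSingleIso A (ComplexShape.up ℤ) 0
  -- the morphism `(singleFunctor A 0).obj S.X₂ ⟶ (singleFunctor A 0).obj S.X₁`
  let Z0 := shiftFunctorZero' (DerivedCategory A) ((0 : ℕ) : ℤ) (by simp)
  let b : (singleFunctor A 0).obj S.X₂ ⟶ (singleFunctor A 0).obj S.X₁ :=
    x.hom ≫ Z0.hom.app ((singleFunctor A 0).obj S.X₁)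
  have hb : (singleFunctor A 0).map S.f ≫ b = 𝟙 _ := by
    have hx' := congrArg Abelian.Ext.hom hx
    rw [Ext.comp_hom, Ext.mk₀_hom, Ext.mk₀_hom, ShiftedHom.mk₀_comp] at hx'
    dsimp only [b]
    rw [← Category.assoc, hx']
    dsimp [ShiftedHom.mk₀, Z0]
    rw [Category.assoc, Iso.inv_hom_id_app]
    simp
  refine ⟨ε.inv.app S.X₂ ≫ (homologyFunctor A 0).map b ≫ ε.hom.app S.X₁, ?_⟩
  have hnat := ε.inv.naturality S.f
  dsimp at hnat
  rw [← Category.assoc, hnat, Category.assoc, ← Functor.map_comp_assoc, hb]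
  simp

end Retraction

section CotorsionLemmas

open Abelian

variable [HasExt.{w} A]

lemma F_closed_cokernels {W F : Set A} (h : IsCompleteCotorsionPair.{w} W F)
    (hker : ∀ ⦃X Y Z : A⦄ (i : X ⟶ Y) (p : Y ⟶ Z), IsShortExact i p → Y ∈ W → Z ∈ W → X ∈ W) :
    ClosedUnderCokernelsOfMonos F := by
  intro B' B C i0 p0 hse hB' hB
  obtain ⟨w0, hS0⟩ := hse
  -- special preenvelope of C
  obtain ⟨C₀, W₀, c, q, hC₀F, hW₀W, ⟨wξ, hξ⟩⟩ := h.2.2 C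
  -- special precover of C₀
  obtain ⟨F₁, W₁, j, p₁, hF₁F, hW₁W, ⟨wη, hη⟩⟩ := h.2.1 C₀
  haveI : Epi p₁ := hη.epi_g
  -- (a) `0 → F₁ → P → C → 0` with `P := pullback p₁ c`
  obtain ⟨wa, ha⟩ := isShortExact_pullback wη hη c
  -- (b) `0 → P → W₁ → W₀ → 0`
  obtain ⟨wb, hb⟩ := isShortExact_pullback_fst_comp wξ hξ p₁
  -- `P ∈ W`
  have hPW : pullback p₁ c ∈ W := hker _ _ ⟨wb, hb⟩ hW₁W hW₀W
  -- (c) `0 → B' → Q → P → 0` with `Q := pullback p0 (pullback.snd p₁ c)`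
  obtain ⟨wc, hc⟩ := isShortExact_pullback w0 hS0 (pullback.snd p₁ c)
  -- (d) `0 → F₁ → Q → B → 0`
  obtain ⟨wd, hd⟩ := isShortExact_pullback' wa ha p0
  -- `Q ∈ F` (extension of objects of `F`)
  have hQF : ∀ X ∈ W, Ext1Zero.{w} X (pullback p0 (pullback.snd p₁ c)) := fun X hX =>
    ext1Zero_two_right hd ((h.1.2 F₁).mp hF₁F X hX) ((h.1.2 B).mp hB X hX)
  -- `P ∈ F` using the splitting of (c)
  have hPF : ∀ X ∈ W, Ext1Zero.{w} X (pullback p₁ c) := fun X hX =>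
    ext1Zero_X₃_right hc ((h.1.2 B').mp hB' _ hPW) (hQF X hX)
  -- Ext⁰-section of (b)
  obtain ⟨σ, hσ⟩ := Ext.covariant_sequence_exact₃ W₀ hb (Ext.mk₀ (𝟙 W₀)) (zero_add 1)
    (by rw [Ext.mk₀_id_comp]; exact (hPF W₀ hW₀W).eq_zero _)
  -- hence an Ext⁰-section of ξ and the vanishing of its class
  have hτ : (σ.comp (Ext.mk₀ p₁) (add_zero 0)).comp (Ext.mk₀ q) (add_zero 0) =
      Ext.mk₀ (𝟙 W₀) := by
    rw [Ext.comp_assoc_of_third_deg_zero, Ext.mk₀_comp_mk₀]; exact hσ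
  have hcls : hξ.extClass = 0 := extClass_zero_of_ext_section hξ _ hτ
  exact (h.1.2 C).mpr fun X hX => ext1Zero_X₁_right hξ hcls ((h.1.2 C₀).mp hC₀F X hX)

lemma W_closed_cokernels {W F : Set A} (h : IsCompleteCotorsionPair.{w} W F)
    (hinj : ∀ X : A, X ∈ W → X ∈ F → Injective X)
    {X Y Z : A} {i : X ⟶ Y} {p : Y ⟶ Z} (hse : IsShortExact i p)
    (hX : X ∈ W) (hY : Y ∈ W) : Z ∈ W := by
  obtain ⟨w0, hS0⟩ := hse
  obtain ⟨C₀, F', c, q, hC₀F, hF'W, ⟨wt, ht⟩⟩ := h.2.2 X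
  have hC₀W : C₀ ∈ W := (h.1.1 C₀).mpr fun G hG =>
    ext1Zero_two_left ht ((h.1.1 X).mp hX G hG) ((h.1.1 F').mp hF'W G hG)
  haveI hC₀inj : Injective C₀ := hinj C₀ hC₀W hC₀F
  -- pushout sequences: (e) `0 → C₀ → P → Z → 0` and (f) `0 → Y → P → F' → 0`
  obtain ⟨we, hePO⟩ := isShortExact_pushout w0 hS0 c
  obtain ⟨wf, hfPO⟩ := isShortExact_pushout' wt ht i
  have hPW : pushout i c ∈ W := (h.1.1 _).mpr fun G hG =>
    ext1Zero_two_left hfPO ((h.1.1 Y).mp hY G hG) ((h.1.1 F').mp hF'W G hG)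
  let sp := hePO.splittingOfInjective
  have hcls : hePO.extClass = 0 := extClass_zero_of_retraction hePO sp.r sp.f_r
  exact (h.1.1 Z).mpr fun G hG => ext1Zero_X₃_left hePO hcls ((h.1.1 _).mp hPW G hG)

lemma memF_of_injective {W F : Set A} (h : IsCompleteCotorsionPair.{w} W F) (I : A)
    (hI : Injective I) : I ∈ F := by
  haveI := hI
  obtain ⟨C₀, F', c, q, hC₀F, hF'W, ⟨wt, ht⟩⟩ := h.2.2 I
  haveI : Mono c := ht.mono_f
  have hr : c ≫ Injective.factorThru (𝟙 I) c = 𝟙 I := Injective.comp_factorThru _ _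
  exact (h.1.2 I).mpr fun X hX =>
    ext1Zero_of_retract_right c _ hr ((h.1.2 C₀).mp hC₀F X hX)

lemma injective_of_mem [EnoughInjectives A] {W F : Set A}
    (h : IsCompleteCotorsionPair.{w} W F) (thick : IsThickClass W)
    (hIW : ∀ X : A, Injective X → X ∈ W) {X : A} (hXW : X ∈ W) (hXF : X ∈ F) :
    Injective X := by
  obtain ⟨wu, hu⟩ := isShortExact_of_mono (Injective.ι X)
  have hQW : cokernel (Injective.ι X) ∈ W :=
    (thick.2 _ _ ⟨wu, hu⟩).1 hXW (hIW _ inferInstance)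
  have h1 : Ext1Zero.{w} (cokernel (Injective.ι X)) X := (h.1.2 X).mp hXF _ hQW
  obtain ⟨r, hr⟩ := exists_retraction hu h1
  refine ⟨?_⟩
  intro Y' Z' g f hm
  exact ⟨Injective.factorThru (g ≫ Injective.ι X) f ≫ r, by
    rw [← Category.assoc, Injective.comp_factorThru, Category.assoc, hr, Category.comp_id]⟩

end CotorsionLemmas

theorem injective_cotorsion_pair_characterizations [EnoughInjectives A] [HasExt.{w} A]
    (W F : Set A) (h : IsCompleteCotorsionPair.{w} W F) :
    ((IsThickClass W ∧ ∀ X : A, (X ∈ W ∧ X ∈ F) ↔ Injective X) ↔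
      ((ClosedUnderKernelsOfEpis W ∧ ClosedUnderCokernelsOfMonos F) ∧
        ∀ X : A, (X ∈ W ∧ X ∈ F) ↔ Injective X)) ∧
    ((IsThickClass W ∧ ∀ X : A, (X ∈ W ∧ X ∈ F) ↔ Injective X) ↔
      (IsThickClass W ∧ ∀ X : A, Injective X → X ∈ W)) := by
  constructor
  · constructor
    · rintro ⟨thick, hchar⟩
      refine ⟨⟨?_, ?_⟩, hchar⟩
      · intro X Y Z i p hse hY hZ
        exact (thick.2 i p hse).2.2 hY hZ
      · exact F_closed_cokernels h (fun X Y Z i p hse hY hZ => (thick.2 i p hse).2.2 hY hZ)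
    · rintro ⟨⟨hker, _hcok⟩, hchar⟩
      refine ⟨⟨?_, ?_⟩, hchar⟩
      · intro X Y s r hsr hX
        exact (h.1.1 Y).mpr fun G hG => ext1Zero_of_retract_left s r hsr ((h.1.1 X).mp hX G hG)
      · intro X Y Z i p hse
        refine ⟨fun hX hY =>
            W_closed_cokernels h (fun T hTW hTF => (hchar T).mp ⟨hTW, hTF⟩) hse hX hY,
          fun hX hZ => ?_, fun hY hZ => hker i p hse hY hZ⟩
        obtain ⟨w0, hS0⟩ := hse
        exact (h.1.1 Y).mpr fun G hG =>
          ext1Zero_two_left hS0 ((h.1.1 X).mp hX G hG) ((h.1.1 Z).mp hZ G hG)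
  · constructor
    · rintro ⟨thick, hchar⟩
      exact ⟨thick, fun X hXinj => ((hchar X).mpr hXinj).1⟩
    · rintro ⟨thick, hIW⟩
      refine ⟨thick, fun X => ⟨fun hX => injective_of_mem h thick hIW hX.1 hX.2,
        fun hXinj => ⟨hIW X hXinj, memF_of_injective h X hXinj⟩⟩⟩
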